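/- Every polynomial f(x) ∈ 𝕆[x] over the real octonion division algebra 𝕆 of degree at least 1 has a root in 𝕆. -/

import Mathlib

/-- Cayley–Dickson double (with γ = -1) of an algebra with involution. -/
def CD (A : Type*) : Type _ := A × A

namespace CD

variable {A : Type*}

instance [AddCommGroup A] : AddCommGroup (CD A) := inferInstanceAs (AddCommGroup (A × A))
noncomputable instance [AddCommGroup A] [Module ℝ A] : Module ℝ (CD A) :=
  inferInstanceAs (Module ℝ (A × A))

/-- Build an element of the double from its two halves. -/
def mk (a b : A) : CD A := (a, b)

section
set_option linter.unusedSectionVars false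

/-- A star operation fixing `1`. -/
class StarOne (A : Type*) [One A] [Star A] : Prop where
  star_one : star (1 : A) = 1

variable [NonAssocRing A] [StarAddMonoid A] [StarOne A]

instance : One (CD A) := ⟨((1 : A), 0)⟩
instance : Mul (CD A) :=
  ⟨fun x y => (x.1 * y.1 - star y.2 * x.2, y.2 * x.1 + x.2 * star y.1)⟩
instance : Star (CD A) := ⟨fun x => (star x.1, -x.2)⟩

lemma mul_def (x y : CD A) :
    x * y = (x.1 * y.1 - star y.2 * x.2, y.2 * x.1 + x.2 * star y.1) := rfl
lemma one_def : (1 : CD A) = ((1 : A), 0) := rfl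
lemma star_def (x : CD A) : star x = (star x.1, -x.2) := rfl
lemma add_def (x y : CD A) : x + y = (x.1 + y.1, x.2 + y.2) := rfl
lemma zero_def : (0 : CD A) = ((0 : A), 0) := rfl

instance instNonAssocRing : NonAssocRing (CD A) where
  __ := (inferInstance : AddCommGroup (CD A))
  left_distrib a b c := by
    show ((a.1 * (b.1 + c.1) - star (b.2 + c.2) * a.2,
      (b.2 + c.2) * a.1 + a.2 * star (b.1 + c.1)) : A × A) =
      ((a.1 * b.1 - star b.2 * a.2) + (a.1 * c.1 - star c.2 * a.2),
        (b.2 * a.1 + a.2 * star b.1) + (c.2 * a.1 + a.2 * star c.1))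
    refine Prod.ext ?_ ?_ <;>
      simp [mul_add, add_mul, star_add] <;> abel
  right_distrib a b c := by
    show (((a.1 + b.1) * c.1 - star c.2 * (a.2 + b.2),
      c.2 * (a.1 + b.1) + (a.2 + b.2) * star c.1) : A × A) =
      ((a.1 * c.1 - star c.2 * a.2) + (b.1 * c.1 - star c.2 * b.2),
        (c.2 * a.1 + a.2 * star c.1) + (c.2 * b.1 + b.2 * star c.1))
    refine Prod.ext ?_ ?_ <;>
      simp [mul_add, add_mul, star_add] <;> abel
  zero_mul a := by
    show (((0 : A) * a.1 - star a.2 * 0, a.2 * 0 + 0 * star a.1) : A × A) = ((0 : A), (0 : A))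
    refine Prod.ext ?_ ?_ <;> simp
  mul_zero a := by
    show ((a.1 * 0 - star (0 : A) * a.2, (0 : A) * a.1 + a.2 * star 0) : A × A) = ((0 : A), (0 : A))
    refine Prod.ext ?_ ?_ <;> simp
  one_mul a := by
    show (((1 : A) * a.1 - star a.2 * 0, a.2 * 1 + 0 * star a.1) : A × A) = a
    refine Prod.ext ?_ ?_ <;> simp
  mul_one a := by
    show ((a.1 * 1 - star (0 : A) * a.2, (0 : A) * a.1 + a.2 * star 1) : A × A) = a
    refine Prod.ext ?_ ?_ <;> simp [StarOne.star_one]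

instance instStarAddMonoid : StarAddMonoid (CD A) where
  star_involutive x := by
    show ((star (star x.1), - -x.2) : A × A) = x
    refine Prod.ext ?_ ?_ <;> simp
  star_add x y := by
    show ((star (x.1 + y.1), -(x.2 + y.2)) : A × A) = (star x.1 + star y.1, -x.2 + -y.2)
    refine Prod.ext ?_ ?_ <;> simp [add_comm]

instance instStarOne : StarOne (CD A) :=
  ⟨Prod.ext (StarOne.star_one) (by show -(0 : A) = 0; simp)⟩

end

end CD

instance : CD.StarOne ℝ := ⟨by simp⟩

/-- The real octonions, as a three-fold Cayley–Dickson double of ℝ. -/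
def Octonion : Type := CD (CD (CD ℝ))

instance : NonAssocRing Octonion := inferInstanceAs (NonAssocRing (CD (CD (CD ℝ))))
instance : StarAddMonoid Octonion := inferInstanceAs (StarAddMonoid (CD (CD (CD ℝ))))
instance : CD.StarOne Octonion := inferInstanceAs (CD.StarOne (CD (CD (CD ℝ))))
noncomputable instance : Module ℝ Octonion := inferInstanceAs (Module ℝ (CD (CD (CD ℝ))))

/-- The real sedenions, as the Cayley–Dickson double of the octonions. -/
def Sedenion : Type := CD Octonion

instance : NonAssocRing Sedenion := inferInstanceAs (NonAssocRing (CD Octonion))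
instance : StarAddMonoid Sedenion := inferInstanceAs (StarAddMonoid (CD Octonion))
instance : CD.StarOne Sedenion := inferInstanceAs (CD.StarOne (CD Octonion))
noncomputable instance : Module ℝ Sedenion := inferInstanceAs (Module ℝ (CD Octonion))

/-- Assemble a complex number, quaternion, octonion, sedenion from real coordinates. -/
def mkC (f : ℕ → ℝ) (k : ℕ) : CD ℝ := CD.mk (f k) (f (k+1))
def mkH (f : ℕ → ℝ) (k : ℕ) : CD (CD ℝ) := CD.mk (mkC f k) (mkC f (k+2))
def mkO (f : ℕ → ℝ) (k : ℕ) : Octonion := CD.mk (mkH f k) (mkH f (k+4))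
def mkS (f : ℕ → ℝ) : Sedenion := CD.mk (mkO f 0) (mkO f 8)

/-- The standard basis `e₀, …, e₁₅` of the sedenions. -/
def sE (n : ℕ) : Sedenion := mkS (fun k => if k = n then 1 else 0)

/-- The standard basis `e₀, …, e₇` of the octonions. -/
def oE (n : ℕ) : Octonion := mkO (fun k => if k = n then 1 else 0) 0

/-- Powers in a (power-associative) non-associative algebra. -/
def cdpow {A : Type*} [One A] [Mul A] (x : A) : ℕ → A
  | 0 => 1
  | n+1 => cdpow x n * x

set_option linter.unusedSectionVars false
set_option maxHeartbeats 1000000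

section
variable {A : Type*} [NonAssocRing A] [StarAddMonoid A] [CD.StarOne A]
@[simp] lemma cd_mul1 (x y : CD A) : (x*y).1 = x.1*y.1 - star y.2 * x.2 := rfl
@[simp] lemma cd_mul2 (x y : CD A) : (x*y).2 = y.2*x.1 + x.2*star y.1 := rfl
@[simp] lemma cd_star1 (x : CD A) : (star x).1 = star x.1 := rfl
@[simp] lemma cd_star2 (x : CD A) : (star x).2 = - x.2 := rfl
@[simp] lemma cd_add1 (x y : CD A) : (x+y).1 = x.1+y.1 := rfl
@[simp] lemma cd_add2 (x y : CD A) : (x+y).2 = x.2+y.2 := rfl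
@[simp] lemma cd_sub1 (x y : CD A) : (x-y).1 = x.1-y.1 := rfl
@[simp] lemma cd_sub2 (x y : CD A) : (x-y).2 = x.2-y.2 := rfl
@[simp] lemma cd_neg1 (x : CD A) : (-x).1 = -x.1 := rfl
@[simp] lemma cd_neg2 (x : CD A) : (-x).2 = -x.2 := rfl
@[simp] lemma cd_one1 : (1 : CD A).1 = 1 := rfl
@[simp] lemma cd_one2 : (1 : CD A).2 = 0 := rfl
@[simp] lemma cd_zero1 : (0 : CD A).1 = 0 := rfl
@[simp] lemma cd_zero2 : (0 : CD A).2 = 0 := rfl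
@[simp] lemma cd_smul1 [Module ℝ A] (r : ℝ) (x : CD A) : (r • x).1 = r • x.1 := rfl
@[simp] lemma cd_smul2 [Module ℝ A] (r : ℝ) (x : CD A) : (r • x).2 = r • x.2 := rfl
end

section
@[simp] lemma oct_mul1 (x y : Octonion) : (x*y).1 = x.1*y.1 - star y.2 * x.2 := rfl
@[simp] lemma oct_mul2 (x y : Octonion) : (x*y).2 = y.2*x.1 + x.2*star y.1 := rfl
@[simp] lemma oct_star1 (x : Octonion) : (star x).1 = star x.1 := rfl
@[simp] lemma oct_star2 (x : Octonion) : (star x).2 = - x.2 := rfl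
@[simp] lemma oct_add1 (x y : Octonion) : (x+y).1 = x.1+y.1 := rfl
@[simp] lemma oct_add2 (x y : Octonion) : (x+y).2 = x.2+y.2 := rfl
@[simp] lemma oct_sub1 (x y : Octonion) : (x-y).1 = x.1-y.1 := rfl
@[simp] lemma oct_sub2 (x y : Octonion) : (x-y).2 = x.2-y.2 := rfl
@[simp] lemma oct_neg1 (x : Octonion) : (-x).1 = -x.1 := rfl
@[simp] lemma oct_neg2 (x : Octonion) : (-x).2 = -x.2 := rfl
@[simp] lemma oct_one1 : (1 : Octonion).1 = 1 := rfl
@[simp] lemma oct_one2 : (1 : Octonion).2 = 0 := rfl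
@[simp] lemma oct_zero1 : (0 : Octonion).1 = 0 := rfl
@[simp] lemma oct_zero2 : (0 : Octonion).2 = 0 := rfl
@[simp] lemma oct_smul1 (r : ℝ) (x : Octonion) : (r • x).1 = r • x.1 := rfl
@[simp] lemma oct_smul2 (r : ℝ) (x : Octonion) : (r • x).2 = r • x.2 := rfl
@[simp] lemma real_smul_eq (r s : ℝ) : r • s = r * s := rfl
end

lemma Oct.ext {x y : Octonion}
    (h0 : x.1.1.1 = y.1.1.1) (h1 : x.1.1.2 = y.1.1.2)
    (h2 : x.1.2.1 = y.1.2.1) (h3 : x.1.2.2 = y.1.2.2)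
    (h4 : x.2.1.1 = y.2.1.1) (h5 : x.2.1.2 = y.2.1.2)
    (h6 : x.2.2.1 = y.2.2.1) (h7 : x.2.2.2 = y.2.2.2) : x = y :=
  Prod.ext (Prod.ext (Prod.ext h0 h1) (Prod.ext h2 h3))
    (Prod.ext (Prod.ext h4 h5) (Prod.ext h6 h7))

/-- The standard inner product of octonions. -/
def dotO (x y : Octonion) : ℝ :=
  x.1.1.1*y.1.1.1 + x.1.1.2*y.1.1.2 + x.1.2.1*y.1.2.1 + x.1.2.2*y.1.2.2
  + x.2.1.1*y.2.1.1 + x.2.1.2*y.2.1.2 + x.2.2.1*y.2.2.1 + x.2.2.2*y.2.2.2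

lemma dotO_comm (x y : Octonion) : dotO x y = dotO y x := by simp [dotO]; try ring
@[simp] lemma dotO_zero_left (y : Octonion) : dotO 0 y = 0 := by simp [dotO]

set_option maxHeartbeats 1000000 in
/-- multiplicativity of the norm -/
lemma dotO_mul_mul (x y : Octonion) : dotO (x*y) (x*y) = dotO x x * dotO y y := by
  simp [dotO]; try ring

set_option maxHeartbeats 1000000 in
/-- alternativity: `x(x̄y) = N(x)y` -/
lemma oct_alt (x y : Octonion) : x * (star x * y) = dotO x x • y := by
  apply Oct.ext <;> simp [dotO] <;> try ring

lemma dotO_star (x : Octonion) : dotO (star x) (star x) = dotO x x := by simp [dotO]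

lemma re_star_mul (x y : Octonion) : (star x * y).1.1.1 = dotO x y := by simp [dotO]; try ring

/-- every octonion satisfies its characteristic quadratic -/
lemma oct_quad (x : Octonion) : x * x = (2 * x.1.1.1) • x - dotO x x • 1 := by
  apply Oct.ext <;> simp [dotO] <;> try ring

lemma oct_posdef (x : Octonion) (h : dotO x x = 0) : x = 0 := by
  simp only [dotO] at h
  apply Oct.ext <;> simp <;> nlinarith [sq_nonneg x.1.1.1, sq_nonneg x.1.1.2, sq_nonneg x.1.2.1,
    sq_nonneg x.1.2.2, sq_nonneg x.2.1.1, sq_nonneg x.2.1.2, sq_nonneg x.2.2.1, sq_nonneg x.2.2.2]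

lemma oct_smul_mul (r : ℝ) (x y : Octonion) : (r • x) * y = r • (x * y) := by
  apply Oct.ext <;> simp <;> try ring

lemma oct_mul_smul (r : ℝ) (x y : Octonion) : x * (r • y) = r • (x * y) := by
  apply Oct.ext <;> simp <;> try ring

lemma dotO_smul_smul (r : ℝ) (x : Octonion) : dotO (r • x) (r • x) = r * r * dotO x x := by
  simp [dotO]; try ring

lemma dotO_expand (r : ℝ) (x y : Octonion) :
    dotO (x + r • y) (x + r • y) = dotO x x + 2 * r * dotO y x + r * r * dotO y y := by
  simp [dotO]; try ring

lemma oct_e1_quad (r s : ℝ) :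
    (r • 1 + s • oE 1) * (r • 1 + s • oE 1)
      = (2*r) • (r • 1 + s • oE 1) - (r*r + s*s) • (1 : Octonion) := by
  apply Oct.ext <;> simp <;> simp [oE, mkO, mkH, mkC, CD.mk] <;> try ring

open Finset in
lemma dotO_add_left (x y z : Octonion) : dotO (x + y) z = dotO x z + dotO y z := by
  simp [dotO]; ring
lemma dotO_smul_left (r : ℝ) (x z : Octonion) : dotO (r • x) z = r * dotO x z := by
  simp [dotO]; ring
lemma dotO_add_right (x y z : Octonion) : dotO x (y + z) = dotO x y + dotO x z := by
  simp [dotO]; ring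
lemma dotO_smul_right (r : ℝ) (x z : Octonion) : dotO x (r • z) = r * dotO x z := by
  simp [dotO]; ring

/-- `dotO` as a bilinear map. -/
noncomputable def Bl : Octonion →ₗ[ℝ] Octonion →ₗ[ℝ] ℝ :=
  LinearMap.mk₂ ℝ dotO dotO_add_left (fun r x y => dotO_smul_left r x y)
    dotO_add_right (fun r x y => dotO_smul_right r x y)

@[simp] lemma Bl_apply (x y : Octonion) : Bl x y = dotO x y := rfl

lemma dot_sum (s : Finset ℕ) (f g : ℕ → ℝ) (c : ℕ → Octonion) :
    dotO (∑ i ∈ s, f i • c i) (∑ j ∈ s, g j • c j)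
      = ∑ i ∈ s, ∑ j ∈ s, f i * g j * dotO (c i) (c j) := by
  simp only [← Bl_apply, map_sum, map_smul, LinearMap.sum_apply, LinearMap.smul_apply,
    smul_eq_mul, Finset.mul_sum]
  rw [Finset.sum_comm]
  exact Finset.sum_congr rfl fun i _ => Finset.sum_congr rfl fun j _ => by ring

/-- coefficients of powers: `a^k = (pq k).1 + (pq k).2 * a`. -/
def ocPQ (t nz : ℝ) : ℕ → ℝ × ℝ
  | 0 => (1, 0)
  | k+1 => (-nz * (ocPQ t nz k).2, (ocPQ t nz k).1 + t * (ocPQ t nz k).2)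

lemma cdpow_eq (t nz : ℝ) (a : Octonion) (ha : a * a = t • a - nz • 1) (k : ℕ) :
    cdpow a k = (ocPQ t nz k).1 • 1 + (ocPQ t nz k).2 • a := by
  induction k with
  | zero => simp [cdpow, ocPQ]
  | succ k ih =>
      show cdpow a k * a = _
      rw [ih, add_mul, oct_smul_mul, oct_smul_mul, one_mul, ha, ocPQ]
      simp only [smul_sub, smul_smul]
      apply Oct.ext <;> simp <;> ring

lemma zpow_eq (t nz : ℝ) (z : ℂ) (hz : z*z = (t:ℂ)*z - (nz:ℂ)) (k : ℕ) :
    z^k = ((ocPQ t nz k).1 : ℂ) + ((ocPQ t nz k).2 : ℂ) * z := by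
  induction k with
  | zero => simp [ocPQ]
  | succ k ih =>
      rw [pow_succ, ih, ocPQ]
      push_cast
      linear_combination ((ocPQ t nz k).2 : ℂ) * hz

/-- evaluation of the polynomial at a quadratic element -/
lemma key_eval (t nz : ℝ) (a : Octonion) (ha : a * a = t • a - nz • 1) (n : ℕ)
    (c : ℕ → Octonion) :
    ∑ i ∈ Finset.range (n+1), c i * cdpow a i
      = (∑ i ∈ Finset.range (n+1), (ocPQ t nz i).1 • c i)
        + (∑ i ∈ Finset.range (n+1), (ocPQ t nz i).2 • c i) * a := by
  rw [Finset.sum_mul, ← Finset.sum_add_distrib]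
  refine Finset.sum_congr rfl fun i _ => ?_
  rw [cdpow_eq t nz a ha i, mul_add, oct_mul_smul, oct_mul_smul, mul_one, oct_smul_mul]

open Finset Polynomial in
lemma coeff_aux (n : ℕ) (g : ℕ → ℕ → ℝ) :
    (∑ i ∈ Finset.range (n+1), ∑ j ∈ Finset.range (n+1),
      Polynomial.C ((g i j : ℝ) : ℂ) * Polynomial.X ^ (i+j)).coeff (2*n)
      = ((g n n : ℝ) : ℂ) := by
  rw [Polynomial.finset_sum_coeff]
  simp only [Polynomial.finset_sum_coeff, Polynomial.coeff_C_mul, Polynomial.coeff_X_pow]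
  rw [Finset.sum_eq_single n]
  · rw [Finset.sum_eq_single n]
    · simp [two_mul]
    · intro j hj hjn
      rw [if_neg (by simp at hj; omega), mul_zero]
    · intro h; simp at h
  · intro i hi hin
    refine Finset.sum_eq_zero fun j hj => ?_
    rw [if_neg (by simp at hi hj; omega), mul_zero]
  · intro h; simp at h

lemma key_complex (n : ℕ) (c : ℕ → Octonion) (z : ℂ) (t nz : ℝ)
    (hz : z*z = (t:ℂ)*z - (nz:ℂ)) :
    ∑ i ∈ Finset.range (n+1), ∑ j ∈ Finset.range (n+1),
        ((dotO (c i) (c j) : ℝ) : ℂ) * z^(i+j)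
      = (↑(dotO (∑ i ∈ Finset.range (n+1), (ocPQ t nz i).1 • c i)
              (∑ i ∈ Finset.range (n+1), (ocPQ t nz i).1 • c i)) : ℂ)
        + (↑(2 * dotO (∑ i ∈ Finset.range (n+1), (ocPQ t nz i).2 • c i)
              (∑ i ∈ Finset.range (n+1), (ocPQ t nz i).1 • c i)) : ℂ) * z
        + (↑(dotO (∑ i ∈ Finset.range (n+1), (ocPQ t nz i).2 • c i)
              (∑ i ∈ Finset.range (n+1), (ocPQ t nz i).2 • c i)) : ℂ) * (z*z) := by
  have hzp := zpow_eq t nz z hz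
  have step1 : ∑ i ∈ Finset.range (n+1), ∑ j ∈ Finset.range (n+1),
        ((dotO (c i) (c j) : ℝ) : ℂ) * z^(i+j)
      = ∑ i ∈ Finset.range (n+1), ∑ j ∈ Finset.range (n+1),
        (((((ocPQ t nz i).1 * (ocPQ t nz j).1 * dotO (c i) (c j) : ℝ)) : ℂ)
        + ((((ocPQ t nz i).1 * (ocPQ t nz j).2 + (ocPQ t nz i).2 * (ocPQ t nz j).1)
              * dotO (c i) (c j) : ℝ) : ℂ) * z
        + ((((ocPQ t nz i).2 * (ocPQ t nz j).2 * dotO (c i) (c j) : ℝ)) : ℂ) * (z*z)) :=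
    Finset.sum_congr rfl fun i _ => Finset.sum_congr rfl fun j _ => by
      rw [pow_add, hzp i, hzp j]; push_cast; ring
  have hmid : ∑ i ∈ Finset.range (n+1), ∑ j ∈ Finset.range (n+1),
        ((ocPQ t nz i).1 * (ocPQ t nz j).2 + (ocPQ t nz i).2 * (ocPQ t nz j).1)
          * dotO (c i) (c j)
      = 2 * ∑ i ∈ Finset.range (n+1), ∑ j ∈ Finset.range (n+1),
          (ocPQ t nz i).2 * (ocPQ t nz j).1 * dotO (c i) (c j) := by
    rw [two_mul]
    simp only [add_mul, Finset.sum_add_distrib]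
    congr 1
    rw [Finset.sum_comm]
    exact Finset.sum_congr rfl fun i _ => Finset.sum_congr rfl fun j _ => by
      rw [dotO_comm]; ring
  have e1 : (↑(dotO (∑ i ∈ Finset.range (n+1), (ocPQ t nz i).1 • c i)
        (∑ i ∈ Finset.range (n+1), (ocPQ t nz i).1 • c i)) : ℂ)
      = ∑ i ∈ Finset.range (n+1), ∑ j ∈ Finset.range (n+1),
          ((((ocPQ t nz i).1 * (ocPQ t nz j).1 * dotO (c i) (c j) : ℝ)) : ℂ) := by
    rw [dot_sum]; push_cast; rfl
  have e2 : (↑(2 * dotO (∑ i ∈ Finset.range (n+1), (ocPQ t nz i).2 • c i)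
        (∑ i ∈ Finset.range (n+1), (ocPQ t nz i).1 • c i)) : ℂ)
      = ∑ i ∈ Finset.range (n+1), ∑ j ∈ Finset.range (n+1),
          ((((ocPQ t nz i).1 * (ocPQ t nz j).2 + (ocPQ t nz i).2 * (ocPQ t nz j).1)
            * dotO (c i) (c j) : ℝ) : ℂ) := by
    rw [dot_sum, ← hmid]; push_cast; rfl
  have e3 : (↑(dotO (∑ i ∈ Finset.range (n+1), (ocPQ t nz i).2 • c i)
        (∑ i ∈ Finset.range (n+1), (ocPQ t nz i).2 • c i)) : ℂ)
      = ∑ i ∈ Finset.range (n+1), ∑ j ∈ Finset.range (n+1),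
          ((((ocPQ t nz i).2 * (ocPQ t nz j).2 * dotO (c i) (c j) : ℝ)) : ℂ) := by
    rw [dot_sum]; push_cast; rfl
  rw [step1, e1, e2, e3]
  simp only [Finset.sum_add_distrib, ← Finset.sum_mul]


/-- Every (left) polynomial `f(x) = Σ_{i ≤ n} cᵢ xⁱ` of degree `n ≥ 1`
(leading coefficient `c n ≠ 0`) over the real octonion division algebra `𝕆` has a root
in `𝕆`. -/
theorem stmt7 (n : ℕ) (hn : 1 ≤ n) (c : ℕ → Octonion) (hc : c n ≠ 0) :
    ∃ x : Octonion, ∑ i ∈ Finset.range (n + 1), c i * cdpow x i = 0 := by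
  classical
  -- the companion polynomial, over ℂ
  set pC : Polynomial ℂ := ∑ i ∈ Finset.range (n+1), ∑ j ∈ Finset.range (n+1),
    Polynomial.C ((dotO (c i) (c j) : ℝ) : ℂ) * Polynomial.X ^ (i+j) with hpC
  have hcn : dotO (c n) (c n) ≠ 0 := fun h => hc (oct_posdef _ h)
  have hcoeff : pC.coeff (2*n) = ((dotO (c n) (c n) : ℝ) : ℂ) :=
    coeff_aux n (fun i j => dotO (c i) (c j))
  have hdeg : 0 < pC.degree := by
    have h1 : ((2*n : ℕ) : WithBot ℕ) ≤ pC.degree :=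
      Polynomial.le_degree_of_ne_zero (by rw [hcoeff]; exact_mod_cast hcn)
    refine lt_of_lt_of_le ?_ h1
    exact_mod_cast Nat.pos_of_ne_zero (by omega)
  obtain ⟨z, hz0⟩ := Complex.exists_root hdeg
  have heval : ∑ i ∈ Finset.range (n+1), ∑ j ∈ Finset.range (n+1),
      ((dotO (c i) (c j) : ℝ) : ℂ) * z^(i+j) = 0 := by
    have := hz0
    simp only [Polynomial.IsRoot, hpC, Polynomial.eval_finset_sum, Polynomial.eval_mul,
      Polynomial.eval_pow, Polynomial.eval_C, Polynomial.eval_X] at this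
    exact this
  set t : ℝ := 2 * z.re with ht
  set nz : ℝ := Complex.normSq z with hnz
  have hzq : z * z = (t:ℂ) * z - (nz:ℂ) := by
    apply Complex.ext <;> simp [ht, hnz, Complex.normSq_apply] <;> ring
  set u : Octonion := ∑ i ∈ Finset.range (n+1), (ocPQ t nz i).1 • c i with hu
  set w : Octonion := ∑ i ∈ Finset.range (n+1), (ocPQ t nz i).2 • c i with hw
  have hkey : (↑(dotO u u) : ℂ) + ↑(2 * dotO w u) * z + ↑(dotO w w) * (z*z) = 0 := by
    rw [hu, hw, ← key_complex n c z t nz hzq]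
    exact heval
  have hRS : (↑(dotO u u - nz * dotO w w) : ℂ)
      + ↑(2 * dotO w u + t * dotO w w) * z = 0 := by
    rw [hzq] at hkey
    push_cast at hkey ⊢
    linear_combination hkey
  have him0 : (2 * dotO w u + t * dotO w w) * z.im = 0 := by
    have := congrArg Complex.im hRS
    simpa using this
  have hre0 : (dotO u u - nz * dotO w w) + (2 * dotO w u + t * dotO w w) * z.re = 0 := by
    have := congrArg Complex.re hRS
    simpa using this
  by_cases him : z.im = 0
  · -- real root case: x = z.re • 1
    refine ⟨z.re • 1, ?_⟩
    have hnzre : nz = z.re * z.re := by rw [hnz, Complex.normSq_apply, him]; ring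
    have ha : (z.re • (1:Octonion)) * (z.re • 1) = t • (z.re • 1) - nz • 1 := by
      rw [hnzre, ht]
      apply Oct.ext <;> simp <;> ring
    rw [key_eval t nz _ ha n c, ← hu, ← hw]
    rw [oct_mul_smul, mul_one]
    apply oct_posdef
    rw [dotO_expand]
    rw [hnzre] at hre0
    rw [ht] at hre0
    linarith [hre0]
  · have hS : 2 * dotO w u + t * dotO w w = 0 := by
      rcases mul_eq_zero.mp him0 with h | h
      · exact h
      · exact absurd h him
    have hR : dotO u u - nz * dotO w w = 0 := by
      rw [hS] at hre0; linarith [hre0]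
    by_cases hw0 : w = 0
    · -- then u = 0, and any quadratic element is a root
      have huu : dotO u u = 0 := by
        rw [hw0] at hR; simpa [dotO] using hR
      have hu0 : u = 0 := oct_posdef _ huu
      refine ⟨z.re • 1 + z.im • oE 1, ?_⟩
      have ha : (z.re • 1 + z.im • oE 1) * (z.re • 1 + z.im • oE 1)
          = t • (z.re • 1 + z.im • oE 1) - nz • 1 := by
        have := oct_e1_quad z.re z.im
        rw [this, ht, hnz, Complex.normSq_apply]
      rw [key_eval t nz _ ha n c, ← hu, ← hw, hu0, hw0, zero_mul, add_zero]
    · -- the generic case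
      have hww : dotO w w ≠ 0 := fun h => hw0 (oct_posdef _ h)
      set a : Octonion := (-(dotO w w)⁻¹) • (star w * u) with hadef
      have hwu : dotO w u = -(z.re) * dotO w w := by
        rw [ht] at hS; linarith [hS]
      have hra : a.1.1.1 = z.re := by
        have h1 : a.1.1.1 = (-(dotO w w)⁻¹) * (star w * u).1.1.1 := rfl
        rw [h1, re_star_mul, hwu]
        field_simp
      have hna : dotO a a = nz := by
        rw [hadef, dotO_smul_smul, dotO_mul_mul, dotO_star]
        have h2 : dotO u u = nz * dotO w w := by linarith [hR]
        rw [h2]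
        field_simp
      have ha : a * a = t • a - nz • 1 := by
        have := oct_quad a
        rw [hra, hna, ← ht] at this
        exact this
      refine ⟨a, ?_⟩
      rw [key_eval t nz _ ha n c, ← hu, ← hw]
      rw [hadef, oct_mul_smul, oct_alt, smul_smul]
      rw [neg_mul, inv_mul_cancel₀ hww]
      simp
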